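/- With the weighted-graph and unit potential flow setup below, let U = (2Π_* − I)(2Π₊ − I) be the quantum walk operator, and define the catalyst w = (1/(R_s √d_s)) Σ_{x ∈ V, x ≠ s} v_x √(d_x) |φ_x⟩. Then w ∈ im(Π_*), U(|φ_s⟩ + w) = (2|f⟩⟨f| − I)|φ_s⟩ + w, and the transduction complexity is ‖w‖² = ET_s/(R_s d_s) − 1, where ET_s := (1/R_s) Σ_{x∈V} v_x² d_x. -/

import Mathlib

open scoped InnerProductSpace BigOperators

namespace Elfs

variable {V : Type*} [Fintype V] [DecidableEq V]

/-- The degree of a vertex: `d_x = Σ_y w_{xy}`. -/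
noncomputable def deg (w : V → V → ℝ) (x : V) : ℝ := ∑ y, w x y

/-- The basis state `|xy⟩` of the edge space. -/
noncomputable def ket (p : V × V) : EuclideanSpace ℂ (V × V) :=
  EuclideanSpace.single p 1

/-- The star state `|φ_x⟩ = (1/√d_x) Σ_y √(w_{xy}) |xy⟩`. -/
noncomputable def starState (w : V → V → ℝ) (x : V) : EuclideanSpace ℂ (V × V) :=
  ((Real.sqrt (deg w x) : ℂ))⁻¹ • ∑ y, ((Real.sqrt (w x y) : ℝ) : ℂ) • ket (x, y)

/-- The electric flow state `|f⟩ = (1/√(2 R_s)) Σ_{(x,y)} (f_{xy}/√(w_{xy})) |xy⟩`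
for the potential flow `f_{xy} = w_{xy}(v_x − v_y)` (terms with `w_{xy} = 0` contribute `0`,
matching the restriction of the sum to edges of positive weight). -/
noncomputable def flowState (w : V → V → ℝ) (v : V → ℝ) (s : V) :
    EuclideanSpace ℂ (V × V) :=
  ((Real.sqrt (2 * v s) : ℂ))⁻¹ •
    ∑ p : V × V, ((w p.1 p.2 * (v p.1 - v p.2) / Real.sqrt (w p.1 p.2) : ℝ) : ℂ) • ket p

/-- The symmetric subspace `span{|xy⟩ + |yx⟩ : (x,y) ∈ E}`. -/
noncomputable def symSpan (E : Set (V × V)) : Submodule ℂ (EuclideanSpace ℂ (V × V)) :=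
  Submodule.span ℂ {u | ∃ p ∈ E, u = ket p + ket p.swap}

/-- `Π₊`, the orthogonal projection onto the symmetric subspace. -/
noncomputable def projSym (E : Set (V × V)) :
    EuclideanSpace ℂ (V × V) →ₗ[ℂ] EuclideanSpace ℂ (V × V) :=
  (symSpan E).subtype ∘ₗ ((symSpan E).orthogonalProjection).toLinearMap

end Elfs

namespace Elfs

variable {V : Type*} [Fintype V] [DecidableEq V]

/-- The catalyst `w = (1/(R_s √d_s)) Σ_{x ≠ s} v_x √(d_x) |φ_x⟩`. -/
noncomputable def catalyst (w : V → V → ℝ) (v : V → ℝ) (s : V) :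
    EuclideanSpace ℂ (V × V) :=
  (((v s * Real.sqrt (deg w s) : ℝ) : ℂ))⁻¹ •
    ∑ x ∈ Finset.univ \ {s}, (((v x * Real.sqrt (deg w x) : ℝ)) : ℂ) • starState w x

/-- The star subspace `span{|φ_x⟩ : x ∉ {s} ∪ M}`. -/
noncomputable def starSpan (w : V → V → ℝ) (s : V) (M : Finset V) :
    Submodule ℂ (EuclideanSpace ℂ (V × V)) :=
  Submodule.span ℂ {u | ∃ x, x ≠ s ∧ x ∉ M ∧ u = starState w x}

/-- `Π_*`, the orthogonal projection onto the star subspace. -/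
noncomputable def projStar (w : V → V → ℝ) (s : V) (M : Finset V) :
    EuclideanSpace ℂ (V × V) →ₗ[ℂ] EuclideanSpace ℂ (V × V) :=
  (starSpan w s M).subtype ∘ₗ ((starSpan w s M).orthogonalProjection).toLinearMap

/-- The outer product `|u⟩⟨u|` as a linear endomorphism. -/
noncomputable def outer {H : Type*} [NormedAddCommGroup H] [InnerProductSpace ℂ H]
    (u : H) : H →ₗ[ℂ] H :=
  LinearMap.smulRight ((innerSL ℂ u).toLinearMap) u

end Elfs

open Elfs

namespace ElfsAux

variable {V : Type*} [Fintype V] [DecidableEq V]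

lemma sum_apply' {ι κ : Type*} [Fintype ι] (f : κ → EuclideanSpace ℂ ι)
    (t : Finset κ) (i : ι) : (∑ k ∈ t, f k) i = ∑ k ∈ t, f k i :=
  map_sum (EuclideanSpace.projₗ (𝕜 := ℂ) i) f t

lemma mem_orthogonal_span {E : Type*} [NormedAddCommGroup E] [InnerProductSpace ℂ E]
    (s : Set E) (x : E) (h : ∀ u ∈ s, ⟪u, x⟫_ℂ = 0) :
    x ∈ (Submodule.span ℂ s)ᗮ := by
  rw [Submodule.mem_orthogonal]
  intro u hu
  induction hu using Submodule.span_induction with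
  | mem u hu => exact h u hu
  | zero => simp
  | add u v _ _ hu hv => simp [inner_add_left, hu, hv]
  | smul c u _ hu => simp [inner_smul_left, hu]

lemma euclid_ext {ι : Type*} [Fintype ι] (x y : EuclideanSpace ℂ ι)
    (h : ∀ i, x i = y i) : x = y := PiLp.ext h

lemma div_sqrt' (r x : ℝ) : r * x / Real.sqrt r = Real.sqrt r * x := by
  rw [mul_comm r x, mul_div_assoc, Real.div_sqrt, mul_comm]

lemma norm_sq_eq {ι : Type*} [Fintype ι] (x : EuclideanSpace ℂ ι) :
    ‖x‖ ^ 2 = ∑ i, ‖x i‖ ^ 2 := by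
  rw [EuclideanSpace.norm_eq, Real.sq_sqrt (by positivity)]

lemma inner_ket_left (p : V × V) (z : EuclideanSpace ℂ (V × V)) :
    ⟪ket p, z⟫_ℂ = z p := by
  simp [ket, EuclideanSpace.inner_single_left]

lemma starState_apply (w : V → V → ℝ) (x : V) (q : V × V) :
    starState w x q =
      if q.1 = x then ((Real.sqrt (w x q.2) / Real.sqrt (deg w x) : ℝ) : ℂ) else 0 := by
  obtain ⟨a, b⟩ := q
  rcases eq_or_ne a x with h | h <;>
    simp [starState, ket, EuclideanSpace.single_apply, sum_apply', Prod.ext_iff, h,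
      PiLp.smul_apply, smul_eq_mul, div_eq_inv_mul, Complex.ofReal_mul, Complex.ofReal_inv]

lemma catalyst_apply (w : V → V → ℝ) (v : V → ℝ) (s : V) (hdeg : ∀ x, 0 < deg w x)
    (q : V × V) :
    catalyst w v s q =
      if q.1 = s then 0
      else ((v q.1 * Real.sqrt (w q.1 q.2) / (v s * Real.sqrt (deg w s)) : ℝ) : ℂ) := by
  have hsq : ∀ x : V, Real.sqrt (deg w x) ≠ 0 := fun x =>
    ne_of_gt (Real.sqrt_pos.2 (hdeg x))
  rw [catalyst, PiLp.smul_apply, sum_apply']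
  simp only [PiLp.smul_apply, smul_eq_mul]
  rcases eq_or_ne q.1 s with h | h
  · rw [if_pos h]
    have h0 : ∀ x ∈ Finset.univ \ {s},
        (((v x * Real.sqrt (deg w x) : ℝ)) : ℂ) * starState w x q = 0 := by
      intro x hx
      rw [Finset.mem_sdiff, Finset.mem_singleton] at hx
      rw [starState_apply, if_neg (by rw [h]; exact fun hh => hx.2 hh.symm), mul_zero]
    rw [Finset.sum_congr rfl h0]
    simp
  · rw [if_neg h]
    rw [Finset.sum_eq_single q.1 (fun x hx hne => by
        rw [starState_apply, if_neg (fun hh => hne hh.symm), mul_zero])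
      (fun habs => absurd (Finset.mem_sdiff.2 ⟨Finset.mem_univ _, by simpa using h⟩) habs)]
    rw [starState_apply, if_pos rfl]
    have hc : ((Real.sqrt (deg w q.1) : ℝ) : ℂ) ≠ 0 := Complex.ofReal_ne_zero.mpr (hsq q.1)
    have key : ((Real.sqrt (deg w q.1) : ℝ) : ℂ) * ((Real.sqrt (deg w q.1) : ℝ) : ℂ)⁻¹ = 1 :=
      mul_inv_cancel₀ hc
    push_cast
    field_simp

lemma flowState_apply (w : V → V → ℝ) (v : V → ℝ) (s : V) (q : V × V) :
    flowState w v s q =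
      ((Real.sqrt (w q.1 q.2) * (v q.1 - v q.2) / Real.sqrt (2 * v s) : ℝ) : ℂ) := by
  rw [flowState, PiLp.smul_apply, sum_apply']
  simp only [ket, PiLp.smul_apply, smul_eq_mul]
  rw [Finset.sum_eq_single q (fun p _ hne => by
      rw [EuclideanSpace.single_apply, if_neg (fun hh => hne hh.symm), mul_zero])
    (fun habs => absurd (Finset.mem_univ q) habs)]
  rw [EuclideanSpace.single_apply, if_pos rfl, mul_one,
    div_sqrt' (w q.1 q.2) (v q.1 - v q.2)]
  push_cast
  ring

end ElfsAux

open ElfsAux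

/-- Elfs transducer: the quantum walk operator `U = (2Π_* − I)(2Π₊ − I)` transduces
`|φ_s⟩` into `(2|f⟩⟨f| − I)|φ_s⟩` with catalyst `w ∈ im Π_*` of squared norm
`ET_s/(R_s d_s) − 1`. -/
theorem stmt8 {V : Type*} [Fintype V] [DecidableEq V]
    (E : Set (V × V)) (w : V → V → ℝ) (s : V) (M : Finset V)
    (hE : ∀ p : V × V, p ∈ E ↔ p.swap ∈ E)
    (hw0 : ∀ x y, 0 ≤ w x y) (hwsymm : ∀ x y, w x y = w y x)
    (hwE : ∀ x y, (x, y) ∉ E → w x y = 0)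
    (hdeg : ∀ x, 0 < deg w x)
    (hM : M.Nonempty) (hsM : s ∉ M)
    (v : V → ℝ) (hvM : ∀ y ∈ M, v y = 0) (hRpos : 0 < v s)
    (hunit : ∑ y, w s y * (v s - v y) = 1)
    (hcons : ∀ x, x ≠ s → x ∉ M → ∑ y, w x y * (v x - v y) = 0)
    (U : EuclideanSpace ℂ (V × V) →ₗ[ℂ] EuclideanSpace ℂ (V × V))
    (hU : U = ((2 : ℂ) • projStar w s M - LinearMap.id) ∘ₗ
        ((2 : ℂ) • projSym E - LinearMap.id)) :
    catalyst w v s ∈ starSpan w s M ∧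
    U (starState w s + catalyst w v s) =
      (((2 : ℂ) • outer (flowState w v s) - LinearMap.id :
          EuclideanSpace ℂ (V × V) →ₗ[ℂ] EuclideanSpace ℂ (V × V)))
        (starState w s) + catalyst w v s ∧
    ‖catalyst w v s‖ ^ 2 =
      ((v s)⁻¹ * ∑ x, v x ^ 2 * deg w x) / (v s * deg w s) - 1 := by
  classical
  have hvs : (0:ℝ) < v s := hRpos
  have hds : (0:ℝ) < deg w s := hdeg s
  have hsds : (0:ℝ) < Real.sqrt (deg w s) := Real.sqrt_pos.2 hds
  have hsqne : ∀ x : V, Real.sqrt (deg w x) ≠ 0 := fun x =>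
    ne_of_gt (Real.sqrt_pos.2 (hdeg x))
  have hT : (0:ℝ) < Real.sqrt (2 * v s) := Real.sqrt_pos.2 (by linarith)
  have hT2 : Real.sqrt (2 * v s) * Real.sqrt (2 * v s) = 2 * v s :=
    Real.mul_self_sqrt (by linarith)
  have hds2 : Real.sqrt (deg w s) * Real.sqrt (deg w s) = deg w s :=
    Real.mul_self_sqrt (le_of_lt hds)
  -- Part 1: membership
  have hmem : catalyst w v s ∈ starSpan w s M := by
    rw [catalyst]
    refine Submodule.smul_mem _ _ (Submodule.sum_mem _ ?_)
    intro x hx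
    rw [Finset.mem_sdiff, Finset.mem_singleton] at hx
    by_cases hxM : x ∈ M
    · simp [hvM x hxM]
    · exact Submodule.smul_mem _ _
        (Submodule.subset_span ⟨x, hx.2, hxM, rfl⟩)
  refine ⟨hmem, ?_, ?_⟩
  · -- Part 2
    set ψ : EuclideanSpace ℂ (V × V) := starState w s + catalyst w v s with hψdef
    have hψ : ∀ q : V × V, ψ q =
        ((v q.1 * Real.sqrt (w q.1 q.2) / (v s * Real.sqrt (deg w s)) : ℝ) : ℂ) := by
      intro q
      rw [hψdef, PiLp.add_apply, starState_apply, catalyst_apply w v s hdeg]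
      rcases eq_or_ne q.1 s with h | h
      · rw [if_pos h, if_pos h, add_zero, h]
        have h1 : ((v s : ℝ) : ℂ) ≠ 0 := Complex.ofReal_ne_zero.mpr (ne_of_gt hvs)
        have h2 : ((Real.sqrt (deg w s) : ℝ) : ℂ) ≠ 0 :=
          Complex.ofReal_ne_zero.mpr (ne_of_gt hsds)
        push_cast
        field_simp
      · rw [if_neg h, if_neg h, zero_add]
    set S : EuclideanSpace ℂ (V × V) :=
      ∑ p : V × V, (((v p.1 + v p.2) * Real.sqrt (w p.1 p.2) /
        (4 * (v s * Real.sqrt (deg w s))) : ℝ) : ℂ) • (ket p + ket p.swap) with hSdef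
    have hS : ∀ q : V × V, S q =
        (((v q.1 + v q.2) * Real.sqrt (w q.1 q.2) /
          (2 * (v s * Real.sqrt (deg w s))) : ℝ) : ℂ) := by
      intro q
      rw [hSdef, sum_apply']
      have hterm : ∀ p : V × V, ((((v p.1 + v p.2) * Real.sqrt (w p.1 p.2) /
          (4 * (v s * Real.sqrt (deg w s))) : ℝ) : ℂ) • (ket p + ket p.swap)) q =
          (((v p.1 + v p.2) * Real.sqrt (w p.1 p.2) /
          (4 * (v s * Real.sqrt (deg w s))) : ℝ) : ℂ) *
          ((if q = p then 1 else 0) + (if q = p.swap then 1 else 0)) := by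
        intro p
        rw [PiLp.smul_apply, PiLp.add_apply, smul_eq_mul, ket, ket,
          EuclideanSpace.single_apply, EuclideanSpace.single_apply]
      rw [Finset.sum_congr rfl fun p _ => hterm p]
      simp only [mul_add, Finset.sum_add_distrib]
      rw [Finset.sum_eq_single q (fun p _ hne => by rw [if_neg (Ne.symm hne), mul_zero])
        (fun habs => absurd (Finset.mem_univ q) habs)]
      rw [Finset.sum_eq_single q.swap
        (fun p _ hne => by
          rw [if_neg, mul_zero]
          intro hh
          exact hne (by rw [hh, Prod.swap_swap]))
        (fun habs => absurd (Finset.mem_univ _) habs)]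
      rw [if_pos rfl, if_pos (by rw [Prod.swap_swap])]
      simp only [Prod.fst_swap, Prod.snd_swap, mul_one]
      rw [hwsymm q.2 q.1]
      push_cast
      ring
    have hSmem : S ∈ symSpan E := by
      rw [hSdef]
      refine Submodule.sum_mem _ fun p _ => ?_
      by_cases hp : p ∈ E
      · exact Submodule.smul_mem _ _ (Submodule.subset_span ⟨p, hp, rfl⟩)
      · have h0 : w p.1 p.2 = 0 := hwE p.1 p.2 (by simpa using hp)
        rw [h0]
        simp
    have hproj1 : (((symSpan E).orthogonalProjection ψ : EuclideanSpace ℂ (V × V))) = S := by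
      refine Submodule.eq_starProjection_of_mem_orthogonal hSmem ?_
      refine mem_orthogonal_span _ _ ?_
      rintro u ⟨p, hp, rfl⟩
      rw [inner_add_left, inner_ket_left, inner_ket_left, PiLp.sub_apply, PiLp.sub_apply,
        hψ, hψ, hS, hS]
      simp only [Prod.fst_swap, Prod.snd_swap]
      rw [hwsymm p.2 p.1]
      push_cast
      ring
    set χ : EuclideanSpace ℂ (V × V) := (2 : ℂ) • S - ψ with hχdef
    have hχ : ∀ q : V × V, χ q =
        ((v q.2 * Real.sqrt (w q.1 q.2) / (v s * Real.sqrt (deg w s)) : ℝ) : ℂ) := by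
      intro q
      rw [hχdef, PiLp.sub_apply, PiLp.smul_apply, hS, hψ, smul_eq_mul]
      push_cast
      ring
    have hstep1 : (((2 : ℂ) • projSym E - LinearMap.id :
        EuclideanSpace ℂ (V × V) →ₗ[ℂ] EuclideanSpace ℂ (V × V))) ψ = χ := by
      rw [LinearMap.sub_apply, LinearMap.smul_apply, LinearMap.id_apply, projSym,
        LinearMap.comp_apply, Submodule.subtype_apply]
      rw [ContinuousLinearMap.coe_coe, hproj1, hχdef]
    have hproj2 : (((starSpan w s M).orthogonalProjection χ : EuclideanSpace ℂ (V × V)))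
        = catalyst w v s := by
      refine Submodule.eq_starProjection_of_mem_orthogonal hmem ?_
      refine mem_orthogonal_span _ _ ?_
      rintro u ⟨x, hxs, hxM, rfl⟩
      rw [PiLp.inner_apply]
      simp only [RCLike.inner_apply]
      have hterm : ∀ q : V × V,
          (starRingEnd ℂ) (starState w x q) * ((χ - catalyst w v s) q) =
          ((if q.1 = x then
            Real.sqrt (w x q.2) / Real.sqrt (deg w x) *
              ((v q.2 - v x) * Real.sqrt (w x q.2) / (v s * Real.sqrt (deg w s)))
          else 0 : ℝ) : ℂ) := by
        intro q
        rw [PiLp.sub_apply, starState_apply, hχ, catalyst_apply w v s hdeg]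
        rcases eq_or_ne q.1 x with h | h
        · have hqs : q.1 ≠ s := by rw [h]; exact hxs
          rw [if_pos h, if_pos h, if_neg hqs, h, Complex.conj_ofReal]
          push_cast
          ring
        · rw [if_neg h, if_neg h]
          simp
      rw [Finset.sum_congr rfl fun q _ => (mul_comm _ _).trans (hterm q), ← Complex.ofReal_sum,
        Complex.ofReal_eq_zero]
      rw [Fintype.sum_prod_type]
      dsimp only
      rw [Finset.sum_eq_single x (fun a _ hne => by simp [hne])
        (fun habs => absurd (Finset.mem_univ x) habs)]
      rw [Finset.sum_congr rfl fun b _ => if_pos rfl]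
      have hb : ∀ b : V,
          Real.sqrt (w x b) / Real.sqrt (deg w x) *
            ((v b - v x) * Real.sqrt (w x b) / (v s * Real.sqrt (deg w s))) =
          w x b * (v b - v x) *
            ((Real.sqrt (deg w x))⁻¹ * (v s * Real.sqrt (deg w s))⁻¹) := by
        intro b
        linear_combination ((v b - v x) * ((Real.sqrt (deg w x))⁻¹ *
          (v s * Real.sqrt (deg w s))⁻¹)) * (Real.mul_self_sqrt (hw0 x b))
      rw [Finset.sum_congr rfl fun b _ => hb b, ← Finset.sum_mul]
      have h0 : ∑ b, w x b * (v b - v x) = 0 := by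
        have hc := hcons x hxs hxM
        have hneg : ∀ b : V, w x b * (v b - v x) = -(w x b * (v x - v b)) := fun b => by ring
        rw [Finset.sum_congr rfl fun b _ => hneg b, Finset.sum_neg_distrib, hc, neg_zero]
      rw [h0, zero_mul]
    have hstep2 : (((2 : ℂ) • projStar w s M - LinearMap.id :
        EuclideanSpace ℂ (V × V) →ₗ[ℂ] EuclideanSpace ℂ (V × V))) χ
        = (2 : ℂ) • catalyst w v s - χ := by
      rw [LinearMap.sub_apply, LinearMap.smul_apply, LinearMap.id_apply, projStar,
        LinearMap.comp_apply, Submodule.subtype_apply]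
      rw [ContinuousLinearMap.coe_coe, hproj2]
    have hip : ⟪flowState w v s, starState w s⟫_ℂ =
        ((((Real.sqrt (2 * v s))⁻¹ * (Real.sqrt (deg w s))⁻¹ : ℝ)) : ℂ) := by
      rw [PiLp.inner_apply]
      simp only [RCLike.inner_apply]
      have hterm : ∀ q : V × V,
          (starRingEnd ℂ) (flowState w v s q) * (starState w s q) =
          ((if q.1 = s then
            w s q.2 * (v s - v q.2) *
              ((Real.sqrt (2 * v s))⁻¹ * (Real.sqrt (deg w s))⁻¹)
          else 0 : ℝ) : ℂ) := by
        intro q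
        rw [flowState_apply, starState_apply]
        rcases eq_or_ne q.1 s with h | h
        · rw [if_pos h, if_pos h, h, Complex.conj_ofReal]
          rw [← Complex.ofReal_mul, Complex.ofReal_inj]
          rw [← Real.mul_self_sqrt (hw0 s q.2)]
          field_simp
          ring_nf
          rw [Real.sqrt_sq (Real.sqrt_nonneg _)]
        · rw [if_neg h, if_neg h, mul_zero]
          simp
      rw [Finset.sum_congr rfl fun q _ => (mul_comm _ _).trans (hterm q), ← Complex.ofReal_sum,
        Complex.ofReal_inj]
      rw [Fintype.sum_prod_type]
      dsimp only
      rw [Finset.sum_eq_single s (fun a _ hne => by simp [hne])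
        (fun habs => absurd (Finset.mem_univ s) habs)]
      rw [Finset.sum_congr rfl fun b _ => if_pos rfl]
      rw [← Finset.sum_mul, hunit, one_mul]
    have hfinal : (2 : ℂ) • catalyst w v s - χ =
        (((2 : ℂ) • outer (flowState w v s) - LinearMap.id :
          EuclideanSpace ℂ (V × V) →ₗ[ℂ] EuclideanSpace ℂ (V × V)))
          (starState w s) + catalyst w v s := by
      apply euclid_ext
      intro q
      have houter : (((2 : ℂ) • outer (flowState w v s) - LinearMap.id :
          EuclideanSpace ℂ (V × V) →ₗ[ℂ] EuclideanSpace ℂ (V × V)))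
          (starState w s) =
          (2 : ℂ) • (⟪flowState w v s, starState w s⟫_ℂ • flowState w v s)
            - starState w s := by
        simp only [LinearMap.sub_apply, LinearMap.smul_apply, LinearMap.id_apply, outer,
          LinearMap.smulRight_apply, ContinuousLinearMap.coe_coe, innerSL_apply_apply]
      rw [houter]
      simp only [PiLp.sub_apply, PiLp.smul_apply, PiLp.add_apply]
      rw [hχ, hip, catalyst_apply w v s hdeg, starState_apply, flowState_apply]
      have hTne : ((Real.sqrt (2 * v s) : ℝ) : ℂ) ≠ 0 :=
        Complex.ofReal_ne_zero.mpr (ne_of_gt hT)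
      have hdsne : ((Real.sqrt (deg w s) : ℝ) : ℂ) ≠ 0 :=
        Complex.ofReal_ne_zero.mpr (ne_of_gt hsds)
      have hvsne : ((v s : ℝ) : ℂ) ≠ 0 := Complex.ofReal_ne_zero.mpr (ne_of_gt hvs)
      have hT2C : ((Real.sqrt (2 * v s) : ℝ) : ℂ) * ((Real.sqrt (2 * v s) : ℝ) : ℂ)
          = 2 * (v s : ℂ) := by exact_mod_cast hT2
      have hTi : ((Real.sqrt (2 * v s) : ℝ) : ℂ)⁻¹ * ((Real.sqrt (2 * v s) : ℝ) : ℂ)⁻¹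
          = (2 * (v s : ℂ))⁻¹ := by rw [← mul_inv, hT2C]
      rcases eq_or_ne q.1 s with h | h
      · rw [if_pos h, if_pos h, h]
        push_cast
        simp only [smul_eq_mul]
        linear_combination (-(2:ℂ) * ((Real.sqrt (w s q.2) : ℝ) : ℂ) *
          ((v s : ℂ) - (v q.2 : ℂ)) * (((Real.sqrt (deg w s) : ℝ) : ℂ))⁻¹) * hTi +
          (-((Real.sqrt (w s q.2) : ℝ) : ℂ) * (((Real.sqrt (deg w s) : ℝ) : ℂ))⁻¹) *
            (mul_inv_cancel₀ hvsne)
      · rw [if_neg h, if_neg h]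
        push_cast
        simp only [smul_eq_mul]
        linear_combination (-(2:ℂ) * ((Real.sqrt (w q.1 q.2) : ℝ) : ℂ) *
          ((v q.1 : ℂ) - (v q.2 : ℂ)) * (((Real.sqrt (deg w s) : ℝ) : ℂ))⁻¹) * hTi
    rw [hU, LinearMap.comp_apply, hstep1, hstep2, hfinal]
  · -- Part 3
    rw [norm_sq_eq]
    have hterm : ∀ q : V × V, ‖catalyst w v s q‖ ^ 2 =
        if q.1 = s then 0
        else (v q.1) ^ 2 * w q.1 q.2 / (v s ^ 2 * deg w s) := by
      intro q
      rw [catalyst_apply w v s hdeg]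
      rcases eq_or_ne q.1 s with h | h
      · rw [if_pos h, if_pos h]
        simp
      · rw [if_neg h, if_neg h, Complex.norm_real, Real.norm_eq_abs, sq_abs, div_pow, mul_pow, mul_pow,
          Real.sq_sqrt (hw0 q.1 q.2), Real.sq_sqrt (le_of_lt hds)]
    rw [Finset.sum_congr rfl fun q _ => hterm q, Fintype.sum_prod_type]
    have hrow : ∀ a : V, (∑ b, if (a, b).1 = s then (0:ℝ)
        else (v (a, b).1) ^ 2 * w (a, b).1 (a, b).2 / (v s ^ 2 * deg w s)) =
        if a = s then 0 else v a ^ 2 * deg w a / (v s ^ 2 * deg w s) := by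
      intro a
      rcases eq_or_ne a s with h | h
      · simp [h]
      · simp only [if_neg h]
        rw [← Finset.sum_div, ← Finset.mul_sum]
        simp [deg]
    rw [Finset.sum_congr rfl fun a _ => hrow a]
    have hsplit : ∑ a : V, (if a = s then (0:ℝ)
        else v a ^ 2 * deg w a / (v s ^ 2 * deg w s)) =
        (∑ a : V, v a ^ 2 * deg w a / (v s ^ 2 * deg w s))
          - v s ^ 2 * deg w s / (v s ^ 2 * deg w s) := by
      rw [← Finset.add_sum_erase _ (fun a => v a ^ 2 * deg w a / (v s ^ 2 * deg w s))
        (Finset.mem_univ s)]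
      rw [← Finset.add_sum_erase _ (fun a => if a = s then (0:ℝ)
        else v a ^ 2 * deg w a / (v s ^ 2 * deg w s)) (Finset.mem_univ s)]
      rw [if_pos rfl]
      rw [Finset.sum_congr rfl (fun a ha => by
        rw [if_neg (Finset.ne_of_mem_erase ha)])]
      ring
    rw [hsplit, ← Finset.sum_div]
    rw [div_self (by positivity)]
    congr 1
    rw [div_eq_div_iff (by positivity) (by positivity)]
    linear_combination (-(∑ x, v x ^ 2 * deg w x) * v s * deg w s) *
      inv_mul_cancel₀ (ne_of_gt hvs)
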